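/- Let μ be the Borel probability measure on [0,1] with density ρ(x) = c·x^{-α} (suitably normalized) for α ∈ (1/2, 1). Then the correlation dimension of μ exists and equals 2(1−α). -/

import Mathlib

open MeasureTheory Filter Metric Topology Set intervalIntegral
open scoped ENNReal NNReal

/-- Correlation integral: `∫ μ(B(x,r)) dμ(x)`. -/
noncomputable def corrIntegral {X : Type*} [PseudoMetricSpace X] [MeasurableSpace X]
    (μ : Measure X) (r : ℝ) : ℝ :=
  ∫ x, (μ (ball x r)).toReal ∂μ

namespace CorrDimAux

noncomputable def dens (α c : ℝ) (x : ℝ) : ℝ≥0∞ :=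
  ENNReal.ofReal (Set.indicator (Set.Icc (0:ℝ) 1) (fun x => c * x ^ (-α)) x)

lemma dens_meas (α c : ℝ) : Measurable (dens α c) := by
  apply Measurable.ennreal_ofReal
  exact (measurable_const.mul (measurable_id.pow_const (-α))).indicator measurableSet_Icc

lemma dens_zero (α c : ℝ) (hα : α ≠ 0) {t : ℝ} (ht : t ≤ 0) : dens α c t = 0 := by
  rcases eq_or_lt_of_le ht with h | h
  · subst h
    simp [dens, Set.indicator_of_mem, Real.zero_rpow (neg_ne_zero.mpr hα)]
  · unfold dens
    rw [Set.indicator_of_notMem (by simp only [Set.mem_Icc, not_and_or]; left; linarith)]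
    simp

lemma dens_le (α c : ℝ) (hc : 0 ≤ c) {t : ℝ} (ht : 0 ≤ t) :
    dens α c t ≤ ENNReal.ofReal (c * t ^ (-α)) := by
  unfold dens
  by_cases h : t ∈ Set.Icc (0:ℝ) 1
  · rw [Set.indicator_of_mem h]
  · rw [Set.indicator_of_notMem h]; simp

lemma dens_ge (α c : ℝ) (hα : 0 < α) (hc : 0 ≤ c) {t u v : ℝ} (h : t ∈ Set.Ioo u v)
    (hu : 0 ≤ u) (hv : v ≤ 1) :
    ENNReal.ofReal (c * v ^ (-α)) ≤ dens α c t := by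
  have ht0 : 0 < t := lt_of_le_of_lt hu h.1
  have htI : t ∈ Set.Icc (0:ℝ) 1 := ⟨ht0.le, le_trans h.2.le hv⟩
  unfold dens
  rw [Set.indicator_of_mem htI]
  exact ENNReal.ofReal_le_ofReal (mul_le_mul_of_nonneg_left
    (Real.rpow_le_rpow_of_nonpos ht0 h.2.le (by linarith)) hc)


lemma lintA {α c : ℝ} (hα1 : 1/2 < α) (hα2 : α < 1) (hc : 0 < c) {R : ℝ} (hR : 0 < R) :
    ∫⁻ t in Set.Ioo 0 R, dens α c t ≤ ENNReal.ofReal (c / (1 - α) * R ^ (1 - α)) := by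
  have hm : Measurable fun t : ℝ => ENNReal.ofReal (c * t ^ (-α)) :=
    (measurable_const.mul (measurable_id.pow_const (-α))).ennreal_ofReal
  have step1 : ∫⁻ t in Set.Ioo 0 R, dens α c t
      ≤ ∫⁻ t in Set.Ioo 0 R, ENNReal.ofReal (c * t ^ (-α)) :=
    setLIntegral_mono hm fun t ht => dens_le α c hc.le ht.1.le
  have hint : IntegrableOn (fun t => c * t ^ (-α)) (Set.Ioo 0 R) := by
    have h1 : IntervalIntegrable (fun t : ℝ => c * t ^ (-α)) volume 0 R :=
      (intervalIntegral.intervalIntegrable_rpow' (by linarith)).const_mul c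
    rw [intervalIntegrable_iff_integrableOn_Ioc_of_le hR.le] at h1
    exact h1.mono_set Set.Ioo_subset_Ioc_self
  have hnn : 0 ≤ᵐ[volume.restrict (Set.Ioo 0 R)] fun t => c * t ^ (-α) :=
    ae_restrict_of_forall_mem measurableSet_Ioo fun t ht =>
      mul_nonneg hc.le (Real.rpow_nonneg ht.1.le _)
  have step2 : ∫⁻ t in Set.Ioo 0 R, ENNReal.ofReal (c * t ^ (-α))
      = ENNReal.ofReal (∫ t in Set.Ioo 0 R, c * t ^ (-α)) :=
    (ofReal_integral_eq_lintegral_ofReal hint hnn).symm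
  have step3 : ∫ t in Set.Ioo 0 R, c * t ^ (-α) = c / (1 - α) * R ^ (1 - α) := by
    rw [← integral_Ioc_eq_integral_Ioo, ← intervalIntegral.integral_of_le hR.le,
      intervalIntegral.integral_const_mul, integral_rpow (Or.inl (by linarith)),
      Real.zero_rpow (by intro h; linarith : -α + 1 ≠ 0),
      show -α + 1 = 1 - α by ring]
    ring
  rw [step2, step3] at step1
  exact step1

lemma lintB {α c : ℝ} (hα1 : 1/2 < α) (hc : 0 < c) {u v : ℝ} (hu : 0 < u) :
    ∫⁻ t in Set.Ioo u v, dens α c t ≤ ENNReal.ofReal (c * u ^ (-α) * (v - u)) := by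
  have step1 : ∫⁻ t in Set.Ioo u v, dens α c t
      ≤ ∫⁻ _ in Set.Ioo u v, ENNReal.ofReal (c * u ^ (-α)) := by
    refine setLIntegral_mono measurable_const fun t ht => ?_
    refine le_trans (dens_le α c hc.le (le_trans hu.le ht.1.le)) ?_
    exact ENNReal.ofReal_le_ofReal (mul_le_mul_of_nonneg_left
      (Real.rpow_le_rpow_of_nonpos hu ht.1.le (by linarith)) hc.le)
  rw [setLIntegral_const, Real.volume_Ioo,
    ← ENNReal.ofReal_mul (mul_nonneg hc.le (Real.rpow_nonneg hu.le _))] at step1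
  exact step1

lemma lintC {α c : ℝ} (hα1 : 1/2 < α) (hα2 : α < 1) (hc : 0 < c) {u v : ℝ}
    (hu : 0 ≤ u) (hv : v ≤ 1) :
    ENNReal.ofReal (c * v ^ (-α)) * ENNReal.ofReal (v - u)
      ≤ ∫⁻ t in Set.Ioo u v, dens α c t := by
  have : ∫⁻ _ in Set.Ioo u v, ENNReal.ofReal (c * v ^ (-α))
      ≤ ∫⁻ t in Set.Ioo u v, dens α c t :=
    setLIntegral_mono (dens_meas α c) fun t ht => dens_ge α c (by linarith) hc.le ht hu hv
  rwa [setLIntegral_const, Real.volume_Ioo] at this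


lemma squeeze {p k A : ℝ} (hk : 0 < k) (hA : 0 < A) (F : ℝ → ℝ)
    (h : ∀ r ∈ Set.Ioo (0:ℝ) (1/3), k * r ^ p ≤ F r ∧ F r ≤ A * r ^ p) :
    Tendsto (fun r => Real.log (F r) / Real.log r) (𝓝[>] 0) (𝓝 p) := by
  have hmem : Set.Ioo (0:ℝ) (1/3) ∈ 𝓝[>] (0:ℝ) :=
    Ioo_mem_nhdsGT_of_mem (by norm_num : (0:ℝ) ∈ Set.Ico 0 (1/3))
  have hlog : Tendsto Real.log (𝓝[>] (0:ℝ)) atBot := Real.tendsto_log_nhdsGT_zero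
  have hneg : Tendsto (fun r => -Real.log r) (𝓝[>] (0:ℝ)) atTop :=
    tendsto_neg_atBot_atTop.comp hlog
  have key : ∀ B : ℝ, Tendsto (fun r => Real.log B / Real.log r + p) (𝓝[>] (0:ℝ)) (𝓝 p) := by
    intro B
    have h1 : Tendsto (fun r => -(Real.log B / -Real.log r)) (𝓝[>] (0:ℝ)) (𝓝 (-0)) :=
      (hneg.const_div_atTop (Real.log B)).neg
    have h2 : Tendsto (fun r => Real.log B / Real.log r) (𝓝[>] (0:ℝ)) (𝓝 0) := by
      simpa [div_neg] using h1
    simpa using h2.add_const p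
  refine tendsto_of_tendsto_of_tendsto_of_le_of_le' (key A) (key k) ?_ ?_
  · filter_upwards [hmem] with r hr
    have hr0 : 0 < r := hr.1
    have hlogneg : Real.log r < 0 := Real.log_neg hr0 (by linarith [hr.2])
    have hF : 0 < F r := lt_of_lt_of_le (by positivity) (h r hr).1
    have hle : Real.log (F r) ≤ Real.log A + p * Real.log r := by
      calc Real.log (F r) ≤ Real.log (A * r ^ p) := Real.log_le_log hF (h r hr).2
        _ = Real.log A + p * Real.log r := by
            rw [Real.log_mul hA.ne' (by positivity), Real.log_rpow hr0]
    have := (div_le_div_right_of_neg hlogneg).mpr hle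
    calc Real.log A / Real.log r + p
        = (Real.log A + p * Real.log r) / Real.log r := by
          rw [add_div, mul_div_assoc, div_self hlogneg.ne, mul_one]
      _ ≤ Real.log (F r) / Real.log r := this
  · filter_upwards [hmem] with r hr
    have hr0 : 0 < r := hr.1
    have hlogneg : Real.log r < 0 := Real.log_neg hr0 (by linarith [hr.2])
    have hF : 0 < F r := lt_of_lt_of_le (by positivity) (h r hr).1
    have hle : Real.log k + p * Real.log r ≤ Real.log (F r) := by
      calc Real.log k + p * Real.log r = Real.log (k * r ^ p) := by
            rw [Real.log_mul hk.ne' (by positivity), Real.log_rpow hr0]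
        _ ≤ Real.log (F r) := Real.log_le_log (by positivity) (h r hr).1
    have := (div_le_div_right_of_neg hlogneg).mpr hle
    calc Real.log (F r) / Real.log r
        ≤ (Real.log k + p * Real.log r) / Real.log r := this
      _ = Real.log k / Real.log r + p := by
          rw [add_div, mul_div_assoc, div_self hlogneg.ne, mul_one]

end CorrDimAux

/-- For the probability measure on `[0,1]` with density proportional to `x ^ (-α)`,
`α ∈ (1/2, 1)`, the correlation dimension exists and equals `2(1-α)`. -/
theorem correlation_dimension_of_power_density (α c : ℝ)
    (hα : α ∈ Set.Ioo (1/2 : ℝ) 1) (hc : 0 < c)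
    (μ : Measure ℝ)
    (hμ : μ = volume.withDensity
      (fun x => ENNReal.ofReal (Set.indicator (Set.Icc (0:ℝ) 1) (fun x => c * x ^ (-α)) x)))
    (hprob : IsProbabilityMeasure μ) :
    Tendsto (fun r : ℝ => Real.log (corrIntegral μ r) / Real.log r)
      (𝓝[>] 0) (𝓝 (2 * (1 - α))) := by
  obtain ⟨hα1, hα2⟩ := hα
  have hβ : (0:ℝ) < 1 - α := by linarith
  have hμd : μ = volume.withDensity (CorrDimAux.dens α c) := hμ
  clear hμ
  set p : ℝ := 2 * (1 - α) with hp
  set k : ℝ := (c * 2 ^ (-α)) ^ 2 with hkdef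
  set A : ℝ := (c / (1 - α) * 3 ^ (1 - α)) ^ 2 + 2 ^ (2 - α) * c ^ 2 / (2 * α - 1) with hAdef
  have hk : 0 < k := by positivity
  have hA : 0 < A := by
    apply add_pos_of_nonneg_of_pos (by positivity)
    apply div_pos (by positivity) (by linarith)
  -- measurability of x ↦ μ (ball x r)
  have hgmeas : ∀ r : ℝ, Measurable fun x => μ (ball x r) := by
    intro r
    have heq : (fun x => μ (ball x r)) = fun x => ∫⁻ t,
        Set.indicator {q : ℝ × ℝ | q.1 - r < q.2 ∧ q.2 < q.1 + r}
          (fun q => CorrDimAux.dens α c q.2) (x, t) ∂volume := by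
      funext x
      rw [Real.ball_eq_Ioo, hμd, withDensity_apply _ measurableSet_Ioo,
        ← lintegral_indicator measurableSet_Ioo]
      congr 1
    rw [heq]
    apply Measurable.lintegral_prod_right'
    apply ((CorrDimAux.dens_meas α c).comp measurable_snd).indicator
    exact (measurableSet_lt (measurable_fst.sub measurable_const) measurable_snd).inter
      (measurableSet_lt measurable_snd (measurable_fst.add measurable_const))
  have hcorr : ∀ r : ℝ, corrIntegral μ r = (∫⁻ x, μ (ball x r) ∂μ).toReal := fun r =>
    integral_toReal (hgmeas r).aemeasurable (ae_of_all _ fun x =>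
      lt_of_le_of_lt (measure_mono (Set.subset_univ _)) (measure_lt_top μ _))
  have main : ∀ r ∈ Set.Ioo (0:ℝ) (1/3),
      k * r ^ p ≤ corrIntegral μ r ∧ corrIntegral μ r ≤ A * r ^ p := by
    intro r hr
    obtain ⟨hr0, hr3⟩ := hr
    have h2r : 2 * r ≤ 1 := by linarith
    have hg : ∀ x : ℝ, μ (ball x r)
        = ∫⁻ t in Set.Ioo (x - r) (x + r), CorrDimAux.dens α c t := by
      intro x
      rw [Real.ball_eq_Ioo, hμd, withDensity_apply _ measurableSet_Ioo]
    -- rpow algebra for the lower bound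
    have hr2 : (2*r) ^ (-α) = 2 ^ (-α) * r ^ (-α) := Real.mul_rpow (by norm_num) hr0.le
    have hra : r ^ (-α) * r = r ^ (1 - α) := by
      rw [show (1 - α) = -α + 1 by ring, Real.rpow_add hr0, Real.rpow_one]
    have hrb : r ^ (1-α) * r ^ (1-α) = r ^ p := by
      rw [← Real.rpow_add hr0]; congr 1; rw [hp]; ring
    have hralg : c * (2*r) ^ (-α) * r * (c * (2*r) ^ (-α) * r) = k * r ^ p := by
      calc c * (2*r) ^ (-α) * r * (c * (2*r) ^ (-α) * r)
          = (c * 2 ^ (-α)) ^ 2 * ((r ^ (-α) * r) * (r ^ (-α) * r)) := by rw [hr2]; ring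
        _ = k * r ^ p := by rw [hra, hrb, hkdef]
    -- lower bound
    have hlow_g : ∀ x ∈ Set.Icc r (2*r),
        ENNReal.ofReal (c * (2*r) ^ (-α) * r) ≤ μ (ball x r) := by
      intro x hx
      have hx0 : 0 < x := lt_of_lt_of_le hr0 hx.1
      have h1 := CorrDimAux.lintC (u := x - r) (v := x) hα1 hα2 hc
        (by linarith [hx.1]) (by linarith [hx.2])
      have h2 : ∫⁻ t in Set.Ioo (x-r) x, CorrDimAux.dens α c t
          ≤ ∫⁻ t in Set.Ioo (x-r) (x+r), CorrDimAux.dens α c t :=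
        lintegral_mono_set (Set.Ioo_subset_Ioo le_rfl (by linarith))
      rw [hg]
      refine le_trans ?_ (le_trans h1 h2)
      rw [show x - (x - r) = r by ring, ← ENNReal.ofReal_mul (by positivity)]
      apply ENNReal.ofReal_le_ofReal
      have hmono : (2*r) ^ (-α) ≤ x ^ (-α) :=
        Real.rpow_le_rpow_of_nonpos hx0 hx.2 (by linarith)
      have : 0 ≤ c * r := by positivity
      nlinarith [hmono]
    have hμIcc : ENNReal.ofReal (c * (2*r) ^ (-α) * r) ≤ μ (Set.Icc r (2*r)) := by
      rw [hμd, withDensity_apply _ measurableSet_Icc]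
      refine le_trans ?_ (lintegral_mono_set Set.Ioo_subset_Icc_self)
      refine le_trans ?_ (CorrDimAux.lintC (u := r) (v := 2*r) hα1 hα2 hc hr0.le h2r)
      rw [show 2*r - r = r by ring, ← ENNReal.ofReal_mul (by positivity)]
    have hLlow : ENNReal.ofReal (k * r ^ p) ≤ ∫⁻ x, μ (ball x r) ∂μ := by
      have step : ∫⁻ x, Set.indicator (Set.Icc r (2*r))
          (fun _ => ENNReal.ofReal (c * (2*r) ^ (-α) * r)) x ∂μ
          ≤ ∫⁻ x, μ (ball x r) ∂μ := by
        refine lintegral_mono fun x => ?_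
        by_cases hx : x ∈ Set.Icc r (2*r)
        · rw [Set.indicator_of_mem hx]; exact hlow_g x hx
        · rw [Set.indicator_of_notMem hx]; exact zero_le
      rw [lintegral_indicator measurableSet_Icc, setLIntegral_const] at step
      refine le_trans ?_ step
      refine le_trans ?_ (mul_le_mul_right hμIcc _)
      rw [← ENNReal.ofReal_mul (by positivity)]
      exact ENNReal.ofReal_le_ofReal (le_of_eq hralg.symm)
    -- uniform cut bound
    have hcut : ∀ s : Set ℝ, MeasurableSet s → (∀ t ∈ s, t < 3*r) →
        ∫⁻ t in s, CorrDimAux.dens α c t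
          ≤ ENNReal.ofReal (c/(1-α) * (3*r) ^ (1-α)) := by
      intro s hs hst
      have mono : ∫⁻ t in s, CorrDimAux.dens α c t
          ≤ ∫⁻ t in Set.Ioo 0 (3*r), CorrDimAux.dens α c t := by
        rw [← lintegral_indicator hs, ← lintegral_indicator measurableSet_Ioo]
        refine lintegral_mono fun t => ?_
        by_cases ht : t ∈ s
        · rw [Set.indicator_of_mem ht]
          by_cases ht2 : t ∈ Set.Ioo 0 (3*r)
          · rw [Set.indicator_of_mem ht2]
          · rw [Set.indicator_of_notMem ht2]
            simp only [Set.mem_Ioo, not_and] at ht2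
            have htle : t ≤ 0 := le_of_not_gt fun h0 => ht2 h0 (hst t ht)
            rw [CorrDimAux.dens_zero α c (by positivity : (0:ℝ) < α).ne' htle]
        · rw [Set.indicator_of_notMem ht]; exact zero_le
      exact le_trans mono (CorrDimAux.lintA hα1 hα2 hc (by linarith))
    have hU1 : ∀ x : ℝ, x ≤ 2*r →
        μ (ball x r) ≤ ENNReal.ofReal (c/(1-α) * (3*r) ^ (1-α)) := by
      intro x hx
      rw [hg]
      exact hcut _ measurableSet_Ioo fun t ht => by linarith [ht.2]
    have hU2 : ∀ x : ℝ, 2*r < x →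
        μ (ball x r) ≤ ENNReal.ofReal (2 * c * r * (x - r) ^ (-α)) := by
      intro x hx
      rw [hg]
      refine le_trans (CorrDimAux.lintB hα1 hc (by linarith : 0 < x - r)) ?_
      refine ENNReal.ofReal_le_ofReal (le_of_eq ?_)
      rw [show x + r - (x - r) = 2*r by ring]
      ring
    set ψ1 : ℝ → ℝ≥0∞ := Set.indicator (Set.Iic (2*r))
      (fun _ => ENNReal.ofReal (c/(1-α) * (3*r) ^ (1-α))) with hψ1
    set ψ2 : ℝ → ℝ≥0∞ := Set.indicator (Set.Ioi (2*r))
      (fun x => ENNReal.ofReal (2 * c * r * (x - r) ^ (-α))) with hψ2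
    have hψ1m : Measurable ψ1 := measurable_const.indicator measurableSet_Iic
    have hψ2m : Measurable ψ2 :=
      ((measurable_const.mul ((measurable_id.sub measurable_const).pow_const
        (-α))).ennreal_ofReal).indicator measurableSet_Ioi
    have hsplit : ∫⁻ x, μ (ball x r) ∂μ ≤ (∫⁻ x, ψ1 x ∂μ) + ∫⁻ x, ψ2 x ∂μ := by
      rw [← lintegral_add_left hψ1m]
      refine lintegral_mono fun x => ?_
      by_cases hx : x ≤ 2*r
      · rw [hψ1, hψ2, Set.indicator_of_mem (Set.mem_Iic.mpr hx)]
        exact le_add_right (hU1 x hx)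
      · push_neg at hx
        rw [hψ1, hψ2, Set.indicator_of_mem (Set.mem_Ioi.mpr hx)]
        exact le_add_left (hU2 x hx)
    -- term 1
    have hterm1 : ∫⁻ x, ψ1 x ∂μ
        ≤ ENNReal.ofReal ((c/(1-α) * 3 ^ (1-α)) ^ 2 * r ^ p) := by
      rw [hψ1, lintegral_indicator measurableSet_Iic, setLIntegral_const]
      have hμIic : μ (Set.Iic (2*r)) ≤ ENNReal.ofReal (c/(1-α) * (3*r) ^ (1-α)) := by
        rw [hμd, withDensity_apply _ measurableSet_Iic]
        refine hcut _ measurableSet_Iic fun t ht => ?_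
        have := Set.mem_Iic.mp ht
        linarith
      refine le_trans (mul_le_mul_right hμIic _) ?_
      rw [← ENNReal.ofReal_mul (by positivity)]
      apply ENNReal.ofReal_le_ofReal
      apply le_of_eq
      have h3r : (3*r) ^ (1-α) = 3 ^ (1-α) * r ^ (1-α) := Real.mul_rpow (by norm_num) hr0.le
      calc c/(1-α) * (3*r) ^ (1-α) * (c/(1-α) * (3*r) ^ (1-α))
          = (c/(1-α) * 3 ^ (1-α)) ^ 2 * (r ^ (1-α) * r ^ (1-α)) := by rw [h3r]; ring
        _ = (c/(1-α) * 3 ^ (1-α)) ^ 2 * r ^ p := by rw [hrb]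
    -- term 2
    have h2a : (0:ℝ) < 2*α - 1 := by linarith
    have hterm2 : ∫⁻ x, ψ2 x ∂μ
        ≤ ENNReal.ofReal (2 ^ (2-α) * c ^ 2 / (2*α-1) * r ^ p) := by
      rw [hμd, lintegral_withDensity_eq_lintegral_mul volume (CorrDimAux.dens_meas α c) hψ2m]
      have hpt : ∀ x, (CorrDimAux.dens α c * ψ2) x ≤ Set.indicator (Set.Ioc (2*r) 1)
          (fun x => ENNReal.ofReal (2 ^ (1+α) * c ^ 2 * r * x ^ (-(2*α)))) x := by
        intro x
        simp only [Pi.mul_apply]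
        by_cases hx1 : x ∈ Set.Ioi (2*r)
        swap
        · rw [hψ2, Set.indicator_of_notMem hx1, mul_zero]
          exact zero_le
        · by_cases hx2 : x ≤ 1
          swap
          · push_neg at hx2
            have hd0 : CorrDimAux.dens α c x = 0 := by
              unfold CorrDimAux.dens
              rw [Set.indicator_of_notMem
                (by simp only [Set.mem_Icc, not_and_or]; right; linarith)]
              simp
            rw [hd0, zero_mul]
            exact zero_le
          · have hx2r : 2*r < x := hx1
            have hxmem : x ∈ Set.Ioc (2*r) 1 := ⟨hx2r, hx2⟩
            rw [Set.indicator_of_mem hxmem, hψ2, Set.indicator_of_mem hx1]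
            have hx0 : 0 < x := by linarith
            have hxI : x ∈ Set.Icc (0:ℝ) 1 := ⟨by linarith, hx2⟩
            have hdx : CorrDimAux.dens α c x = ENNReal.ofReal (c * x ^ (-α)) := by
              unfold CorrDimAux.dens
              rw [Set.indicator_of_mem hxI]
            rw [hdx, ← ENNReal.ofReal_mul (by positivity)]
            apply ENNReal.ofReal_le_ofReal
            have hxr : x/2 ≤ x - r := by linarith
            have h5 : (x-r) ^ (-α) ≤ (x/2) ^ (-α) :=
              Real.rpow_le_rpow_of_nonpos (by linarith) hxr (by linarith)
            have h6 : (x/2) ^ (-α) = x ^ (-α) * 2 ^ α := by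
              rw [Real.div_rpow hx0.le (by norm_num : (0:ℝ) ≤ 2),
                Real.rpow_neg (by norm_num : (0:ℝ) ≤ 2)]
              field_simp
            have h7 : x ^ (-α) * x ^ (-α) = x ^ (-(2*α)) := by
              rw [← Real.rpow_add hx0]
              congr 1
              ring
            have h8 : (2:ℝ) ^ (1+α) = 2 * 2 ^ α := by
              rw [Real.rpow_add (by norm_num : (0:ℝ) < 2), Real.rpow_one]
            calc c * x ^ (-α) * (2 * c * r * (x - r) ^ (-α))
                ≤ c * x ^ (-α) * (2 * c * r * (x/2) ^ (-α)) := by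
                  refine mul_le_mul_of_nonneg_left ?_ (by positivity)
                  exact mul_le_mul_of_nonneg_left h5 (by positivity)
              _ = 2 ^ (1+α) * c ^ 2 * r * x ^ (-(2*α)) := by
                  rw [h6, h8, ← h7]; ring
      refine le_trans (lintegral_mono hpt) ?_
      rw [lintegral_indicator measurableSet_Ioc]
      have hint2 : IntegrableOn (fun x : ℝ => 2 ^ (1+α) * c ^ 2 * r * x ^ (-(2*α)))
          (Set.Ioc (2*r) 1) := by
        have h1 : IntervalIntegrable (fun x : ℝ => 2 ^ (1+α) * c ^ 2 * r * x ^ (-(2*α)))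
            volume (2*r) 1 :=
          (intervalIntegral.intervalIntegrable_rpow
            (Or.inr (notMem_uIcc_of_lt (by linarith) (by norm_num)))).const_mul _
        rwa [intervalIntegrable_iff_integrableOn_Ioc_of_le (by linarith)] at h1
      have hnn2 : 0 ≤ᵐ[volume.restrict (Set.Ioc (2*r) 1)]
          fun x : ℝ => 2 ^ (1+α) * c ^ 2 * r * x ^ (-(2*α)) :=
        ae_restrict_of_forall_mem measurableSet_Ioc fun t ht =>
          mul_nonneg (by positivity) (Real.rpow_nonneg (by linarith [ht.1]) _)
      rw [← ofReal_integral_eq_lintegral_ofReal hint2 hnn2]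
      apply ENNReal.ofReal_le_ofReal
      have hX : (0:ℝ) ≤ (2*r) ^ (-(2*α)+1) := Real.rpow_nonneg (by linarith) _
      have hval : ∫ x in Set.Ioc (2*r) 1, 2 ^ (1+α) * c ^ 2 * r * x ^ (-(2*α))
          = 2 ^ (1+α) * c ^ 2 * r * ((1 - (2*r) ^ (-(2*α)+1)) / (-(2*α)+1)) := by
        rw [← intervalIntegral.integral_of_le (by linarith : 2*r ≤ 1),
          intervalIntegral.integral_const_mul,
          integral_rpow (Or.inr ⟨by intro h; apply absurd h; intro h2; linarith,
            notMem_uIcc_of_lt (by linarith) (by norm_num)⟩),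
          Real.one_rpow]
      rw [hval]
      have key : (1 - (2*r) ^ (-(2*α)+1)) / (-(2*α)+1)
          = ((2*r) ^ (-(2*α)+1) - 1) / (2*α-1) := by
        rw [show -(2*α)+1 = -(2*α-1) by ring, div_neg,
          show (2*r) ^ (-(2*α-1)) - 1 = -(1 - (2*r) ^ (-(2*α-1))) by ring, neg_div]
      rw [key]
      have e1 : (2*r) ^ (-(2*α)+1) = 2 ^ (-(2*α)+1) * r ^ (-(2*α)+1) :=
        Real.mul_rpow (by norm_num) hr0.le
      have e2 : r ^ p = r * r ^ (-(2*α)+1) := by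
        rw [show p = 1 + (-(2*α)+1) by rw [hp]; ring, Real.rpow_add hr0, Real.rpow_one]
      have e3 : (2:ℝ) ^ (1+α) * 2 ^ (-(2*α)+1) = 2 ^ (2-α) := by
        rw [← Real.rpow_add (by norm_num : (0:ℝ) < 2)]
        congr 1
        ring
      calc 2 ^ (1+α) * c ^ 2 * r * (((2*r) ^ (-(2*α)+1) - 1) / (2*α-1))
          ≤ 2 ^ (1+α) * c ^ 2 * r * ((2*r) ^ (-(2*α)+1) / (2*α-1)) := by
            refine mul_le_mul_of_nonneg_left ?_ (by positivity)
            exact (div_le_div_iff_of_pos_right h2a).mpr (by linarith)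
        _ = 2 ^ (2-α) * c ^ 2 / (2*α-1) * r ^ p := by
            rw [e1, e2, ← e3]; ring
    -- combine
    have hLup : ∫⁻ x, μ (ball x r) ∂μ ≤ ENNReal.ofReal (A * r ^ p) := by
      refine le_trans hsplit (le_trans (add_le_add hterm1 hterm2) ?_)
      rw [← ENNReal.ofReal_add (by positivity)
        (mul_nonneg (div_nonneg (by positivity) h2a.le) (Real.rpow_nonneg hr0.le _))]
      apply ENNReal.ofReal_le_ofReal
      apply le_of_eq
      rw [hAdef]
      ring
    have hfin : ∫⁻ x, μ (ball x r) ∂μ ≠ ⊤ := ne_top_of_le_ne_top ENNReal.ofReal_ne_top hLup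
    constructor
    · rw [hcorr r]
      have h := ENNReal.toReal_mono hfin hLlow
      rwa [ENNReal.toReal_ofReal (mul_nonneg hk.le (Real.rpow_nonneg hr0.le _))] at h
    · rw [hcorr r]
      exact ENNReal.toReal_le_of_le_ofReal (mul_nonneg hA.le (Real.rpow_nonneg hr0.le _)) hLup
  have := CorrDimAux.squeeze hk hA (corrIntegral μ) main
  exact this
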